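/- Let a, b be formal power series over ℝ in the variable X with D the formal derivative, and suppose X·(Da) − a = 0. Then there exist unique λ, μ ∈ ℝ and a unique formal power series f over ℝ with constant coefficient 0 such that a = λ·X and b = μ·1 − X·(Df). (The first cohomology of the rotation-invariant (zero Fourier mode) part of the Poisson complex of the formal neighborhood of the necklace is two-dimensional, spanned by the classes of the rotation ∂_θ and the dilation I ∂_I.) -/

import Mathlib

open PowerSeries

/-- Zero Fourier mode of the formal Poisson complex of the necklace: a
1-cocycle `(a, b)` (i.e. `X·a′ − a = 0`) is, uniquely modulo coboundaries
`(0, −X f′)` with `f(0) = 0`, a combination `λ·(X, 0) + μ·(0, 1)` of the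
dilation `I ∂_I` and the rotation `∂_θ`: the first cohomology of the
invariant part is two-dimensional. -/
theorem formal_mode_zero_H1 (a b : PowerSeries ℝ)
    (hcocycle : X * derivative ℝ a - a = 0) :
    ∃! lmf : ℝ × ℝ × PowerSeries ℝ,
      constantCoeff lmf.2.2 = 0 ∧
      a = C lmf.1 * X ∧
      b = C lmf.2.1 * 1 - X * derivative ℝ lmf.2.2 := by
  have hco : ∀ n : ℕ, coeff n (X * derivative ℝ a) = coeff n a := by
    intro n
    have := congrArg (coeff n) hcocycle
    simpa [sub_eq_zero] using this
  have ha0 : coeff 0 a = 0 := by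
    have := hco 0
    rw [coeff_zero_X_mul] at this
    exact this.symm
  have han : ∀ m : ℕ, 1 ≤ m → coeff (m + 1) a = 0 := by
    intro m hm
    have h := hco (m + 1)
    rw [coeff_succ_X_mul, coeff_derivative] at h
    have : coeff (m + 1) a * (m : ℝ) = 0 := by ring_nf; ring_nf at h; linarith
    rcases mul_eq_zero.1 this with h' | h'
    · exact h'
    · exact absurd h' (by exact_mod_cast Nat.one_le_iff_ne_zero.1 hm)
  have ha : a = C (coeff 1 a) * X := by
    ext n
    rcases n with - | m
    · simpa using ha0
    · rcases m with - | k
      · simp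
      · rw [han (k + 1) (by omega)]
        simp [coeff_C_mul, coeff_X]
  -- construct f
  set f : PowerSeries ℝ := PowerSeries.mk fun n =>
    if n = 0 then 0 else -(coeff n b) / n with hf
  have hf0 : constantCoeff f = 0 := by simp [hf]
  have hb : b = C (coeff 0 b) * 1 - X * derivative ℝ f := by
    ext n
    rcases n with - | m
    · simp [coeff_zero_X_mul]
    · rw [map_sub, coeff_succ_X_mul, coeff_derivative]
      have : coeff (m + 1) f = -(coeff (m + 1) b) / (m + 1) := by
        simp [hf]
      rw [this]
      have hne : ((m : ℝ) + 1) ≠ 0 := by positivity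
      field_simp
      simp [coeff_C_mul]
  refine ⟨⟨coeff 1 a, coeff 0 b, f⟩, ⟨hf0, ha, hb⟩, ?_⟩
  rintro ⟨l, m, g⟩ ⟨hg0, hag, hbg⟩
  have hl : l = coeff 1 a := by
    have := congrArg (coeff 1) hag
    simpa using this.symm
  have hm : m = coeff 0 b := by
    have := congrArg (coeff 0) hbg
    simpa [coeff_zero_X_mul] using this.symm
  have hgf : g = f := by
    ext n
    rcases n with - | k
    · rw [coeff_zero_eq_constantCoeff, hg0]
      simp [hf]
    · have h1 := congrArg (coeff (k + 1)) hbg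
      have h2 := congrArg (coeff (k + 1)) hb
      rw [map_sub, coeff_succ_X_mul, coeff_derivative] at h1 h2
      have hC : coeff (k+1) (C m * 1) = coeff (k+1) (C (coeff 0 b) * 1) := by
        simp [coeff_C_mul]
      have h3 : coeff (k + 1) g * ((k : ℝ) + 1) = coeff (k + 1) f * ((k : ℝ) + 1) := by
        have := h1.symm.trans h2
        push_cast at this ⊢
        rw [hC] at this
        linarith
      have hne : ((k : ℝ) + 1) ≠ 0 := by positivity
      exact mul_right_cancel₀ hne h3
  simp [hl, hm, hgf]
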